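/- Let K be an integral domain properly contained in a field L. The composite K + XL[X] is a Bézout domain if and only if L is the fraction field of K and K is a Bézout domain. -/

import Mathlib

section CompositeSetup

variable {L : Type*} [Field L]

/-- The polynomial composite `K + X L[X]` as a subring of `L[X]`. -/
def composite (K : Subring L) : Subring (Polynomial L) where
  carrier := {p | p.coeff 0 ∈ K}
  one_mem' := by simpa using K.one_mem
  zero_mem' := by simpa using K.zero_mem
  add_mem' := by
    intro a b ha hb
    simpa [Polynomial.coeff_add] using K.add_mem ha hb
  neg_mem' := by
    intro a ha
    simpa [Polynomial.coeff_neg] using K.neg_mem ha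
  mul_mem' := by
    intro a b ha hb
    simpa [Polynomial.mul_coeff_zero] using K.mul_mem ha hb

/-- `L` is the fraction field of the subring `K`. -/
def FracOfField (K : Subring L) : Prop :=
  ∀ l : L, ∃ a ∈ K, ∃ b ∈ K, b ≠ 0 ∧ l * b = a

/-- A Prüfer domain: every nonzero finitely generated ideal is invertible. -/
def IsPruferDomain (A : Type*) [CommRing A] [IsDomain A] : Prop :=
  ∀ I : Ideal A, I ≠ ⊥ → I.FG →
    IsUnit (I : FractionalIdeal (nonZeroDivisors A) (FractionRing A))

/-- A GCD domain: any two nonzero elements admit a greatest common divisor. -/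
def IsGCDDomain (A : Type*) [CommRing A] [IsDomain A] : Prop :=
  ∀ a b : A, a ≠ 0 → b ≠ 0 →
    ∃ g : A, g ∣ a ∧ g ∣ b ∧ ∀ c : A, c ∣ a → c ∣ b → c ∣ g

end CompositeSetup

section Aux
open Polynomial
variable {L : Type*} [Field L]

private lemma mem_composite {K : Subring L} {p : L[X]} : p ∈ composite K ↔ p.coeff 0 ∈ K :=
  Iff.rfl

/-- Adjusting a Bézout identity so the constant coefficients land where we want. -/
private lemma adjust {F G : L[X]} (hcop : IsCoprime F G) {lam α β : L}
    (hF0 : F.coeff 0 ≠ 0) (hsum : α * F.coeff 0 + β * G.coeff 0 = lam) :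
    ∃ P Q : L[X], P * F + Q * G = C lam ∧ P.coeff 0 = α ∧ Q.coeff 0 = β := by
  obtain ⟨U, V, hUV⟩ := hcop
  set t := (lam * V.coeff 0 - β) / F.coeff 0 with ht
  have hPQ : (C lam * U + C t * G) * F + (C lam * V - C t * F) * G = C lam := by
    linear_combination (C lam : L[X]) * hUV
  have hQ0 : (C lam * V - C t * F).coeff 0 = β := by
    simp only [coeff_sub, mul_coeff_zero, coeff_C_zero]
    rw [ht, div_mul_cancel₀ _ hF0]
    ring
  have hid := congrArg (fun p : L[X] => p.coeff 0) hPQ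
  simp only [coeff_add, mul_coeff_zero, coeff_C_zero, hQ0] at hid
  refine ⟨_, _, hPQ, ?_, hQ0⟩
  simp only [coeff_add, mul_coeff_zero, coeff_C_zero]
  exact mul_right_cancel₀ hF0 (add_right_cancel (hid.trans hsum.symm))

private lemma pair_principal (K : Subring L) (hfrac : FracOfField K) (hbez : IsBezout ↥K)
    (f g : ↥(composite K)) : (Ideal.span {f, g} : Ideal ↥(composite K)).IsPrincipal := by
  classical
  by_cases hf : f = 0
  · refine ⟨g, ?_⟩
    rw [hf, Ideal.span_insert,
      show Ideal.span {(0 : ↥(composite K))} = ⊥ from Ideal.span_singleton_eq_bot.mpr rfl,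
      bot_sup_eq]
  by_cases hg : g = 0
  · refine ⟨f, ?_⟩
    rw [hg, Ideal.span_insert,
      show Ideal.span {(0 : ↥(composite K))} = ⊥ from Ideal.span_singleton_eq_bot.mpr rfl,
      sup_bot_eq]
  letI : DecidableEq L[X] := Classical.decEq _
  letI : GCDMonoid L[X] := EuclideanDomain.gcdMonoid _
  have hf1 : (f : L[X]) ≠ 0 := fun h => hf (Subtype.ext h)
  have hg1 : (g : L[X]) ≠ 0 := fun h => hg (Subtype.ext h)
  obtain ⟨D, F, G, s, a, b, hDne, hDF, hDG, hcop, hsK, haK, hbK, hs0, hFa, hGb, hscale⟩ :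
      ∃ (D F G : L[X]) (s a b : L), D ≠ 0 ∧ D * F = (f : L[X]) ∧ D * G = (g : L[X]) ∧
        IsCoprime F G ∧ s ∈ K ∧ a ∈ K ∧ b ∈ K ∧ s ≠ 0 ∧ F.coeff 0 * s = a ∧
        G.coeff 0 * s = b ∧ ∀ c : L, c ∈ K → c / s * D.coeff 0 ∈ K := by
    set D0 := GCDMonoid.gcd (f : L[X]) (g : L[X]) with hD0def
    have hD0ne : D0 ≠ 0 := gcd_ne_zero_of_left hf1
    set F0 := (f : L[X]) / D0 with hF0def
    set G0 := (g : L[X]) / D0 with hG0def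
    have hF0 : D0 * F0 = (f : L[X]) :=
      EuclideanDomain.mul_div_cancel' hD0ne (gcd_dvd_left _ _)
    have hG0 : D0 * G0 = (g : L[X]) :=
      EuclideanDomain.mul_div_cancel' hD0ne (gcd_dvd_right _ _)
    have hcop0 : IsCoprime F0 G0 := isCoprime_div_gcd_div_gcd hg1
    by_cases hd : D0.coeff 0 = 0
    · obtain ⟨a1, ha1, s1, hs1, hs1ne, hfa1⟩ := hfrac (F0.coeff 0)
      obtain ⟨b1, hb1, s2, hs2, hs2ne, hgb1⟩ := hfrac (G0.coeff 0)
      refine ⟨D0, F0, G0, s1 * s2, a1 * s2, b1 * s1, hD0ne, hF0, hG0, hcop0,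
        K.mul_mem hs1 hs2, K.mul_mem ha1 hs2, K.mul_mem hb1 hs1,
        mul_ne_zero hs1ne hs2ne, ?_, ?_, ?_⟩
      · rw [← mul_assoc, hfa1]
      · calc G0.coeff 0 * (s1 * s2) = G0.coeff 0 * s2 * s1 := by ring
          _ = b1 * s1 := by rw [hgb1]
      · intro c hc
        rw [hd, mul_zero]
        exact K.zero_mem
    · set e := D0.coeff 0 with he
      have hCe : (C e⁻¹ : L[X]) * C e = 1 := by
        rw [← C_mul, inv_mul_cancel₀ hd, C_1]
      refine ⟨C e⁻¹ * D0, C e * F0, C e * G0, 1, (f : L[X]).coeff 0, (g : L[X]).coeff 0,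
        mul_ne_zero (by simp [hd]) hD0ne, ?_, ?_, ?_, K.one_mem, f.2, g.2, one_ne_zero,
        ?_, ?_, ?_⟩
      · calc C e⁻¹ * D0 * (C e * F0) = C e⁻¹ * C e * (D0 * F0) := by ring
          _ = (f : L[X]) := by rw [hCe, one_mul, hF0]
      · calc C e⁻¹ * D0 * (C e * G0) = C e⁻¹ * C e * (D0 * G0) := by ring
          _ = (g : L[X]) := by rw [hCe, one_mul, hG0]
      · obtain ⟨U, V, hUV⟩ := hcop0
        refine ⟨C e⁻¹ * U, C e⁻¹ * V, ?_⟩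
        calc C e⁻¹ * U * (C e * F0) + C e⁻¹ * V * (C e * G0)
            = C e⁻¹ * C e * (U * F0 + V * G0) := by ring
          _ = 1 := by rw [hCe, hUV, mul_one]
      · have := congrArg (fun p : L[X] => p.coeff 0) hF0
        simp only [mul_coeff_zero] at this
        rw [mul_one, mul_coeff_zero, coeff_C_zero]
        exact this
      · have := congrArg (fun p : L[X] => p.coeff 0) hG0
        simp only [mul_coeff_zero] at this
        rw [mul_one, mul_coeff_zero, coeff_C_zero]
        exact this
      · intro c hc
        have h1 : (C e⁻¹ * D0).coeff 0 = 1 := by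
          rw [mul_coeff_zero, coeff_C_zero, inv_mul_cancel₀ hd]
        rw [h1, div_one, mul_one]
        exact hc
  -- F, G do not both vanish at 0
  have hX : ¬(F.coeff 0 = 0 ∧ G.coeff 0 = 0) := by
    rintro ⟨h1, h2⟩
    exact Polynomial.not_isUnit_X
      (hcop.isUnit_of_dvd' (X_dvd_iff.mpr h1) (X_dvd_iff.mpr h2))
  have hab : a ≠ 0 ∨ b ≠ 0 := by
    by_contra h
    push_neg at h
    refine hX ⟨?_, ?_⟩
    · rcases mul_eq_zero.mp (hFa.trans h.1) with h' | h'
      · exact h'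
      · exact absurd h' hs0
    · rcases mul_eq_zero.mp (hGb.trans h.2) with h' | h'
      · exact h'
      · exact absurd h' hs0
  -- Bézout in K
  haveI := hbez
  set A : ↥K := ⟨a, haK⟩ with hA
  set B : ↥K := ⟨b, hbK⟩ with hB
  obtain ⟨c, hc⟩ := (IsBezout.iff_span_pair_isPrincipal.mp hbez A B).principal
  have hAmem : A ∈ Ideal.span {A, B} := Ideal.subset_span (Set.mem_insert _ _)
  have hBmem : B ∈ Ideal.span {A, B} :=
    Ideal.subset_span (Set.mem_insert_of_mem _ rfl)
  rw [hc] at hAmem hBmem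
  obtain ⟨a', ha'⟩ := Ideal.mem_span_singleton.mp hAmem
  obtain ⟨b', hb'⟩ := Ideal.mem_span_singleton.mp hBmem
  have hcmem : c ∈ Ideal.span {A, B} := by
    rw [hc]; exact Ideal.subset_span rfl
  obtain ⟨α, β, hαβ⟩ := Ideal.mem_span_pair.mp hcmem
  -- coerce to L
  have ha'L : a = (c : L) * (a' : L) := by
    simpa [hA, MulMemClass.coe_mul] using Subtype.ext_iff.mp ha'
  have hb'L : b = (c : L) * (b' : L) := by
    simpa [hB, MulMemClass.coe_mul] using Subtype.ext_iff.mp hb'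
  have hαβL : (α : L) * a + (β : L) * b = (c : L) := by
    simpa [hA, hB, MulMemClass.coe_mul] using Subtype.ext_iff.mp hαβ
  have hc0 : (c : L) ≠ 0 := by
    intro h0
    rcases hab with h | h
    · exact h (by rw [ha'L, h0, zero_mul])
    · exact h (by rw [hb'L, h0, zero_mul])
  set lam := (c : L) / s with hlam
  have hlam0 : lam ≠ 0 := div_ne_zero hc0 hs0
  have hHK : (C lam * D).coeff 0 ∈ K := by
    rw [mul_coeff_zero, coeff_C_zero]
    exact hscale _ c.2
  refine ⟨(⟨C lam * D, hHK⟩ : ↥(composite K)), le_antisymm ?_ ?_⟩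
  · -- span {f, g} ≤ span {H}
    rw [Ideal.span_le]
    have hdvd : ∀ (x : ↥(composite K)) (X₁ : L[X]) (w : ↥K), D * X₁ = (x : L[X]) →
        X₁.coeff 0 * s = (c : L) * (w : L) →
        x ∈ (Ideal.span {(⟨C lam * D, hHK⟩ : ↥(composite K))} : Ideal ↥(composite K)) := by
      intro x X₁ w hDx hwx
      have hmem : (C lam⁻¹ * X₁).coeff 0 ∈ K := by
        have : (C lam⁻¹ * X₁).coeff 0 = (w : L) := by
          rw [mul_coeff_zero, coeff_C_zero, hlam]
          rw [inv_div]
          field_simp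
          linear_combination hwx
        rw [this]; exact w.2
      refine Ideal.mem_span_singleton.mpr ⟨⟨C lam⁻¹ * X₁, hmem⟩, ?_⟩
      apply Subtype.ext
      show (x : L[X]) = (C lam * D) * (C lam⁻¹ * X₁)
      calc (x : L[X]) = D * X₁ := hDx.symm
        _ = (C lam * C lam⁻¹) * (D * X₁) := by
            rw [← C_mul, mul_inv_cancel₀ hlam0, C_1, one_mul]
        _ = (C lam * D) * (C lam⁻¹ * X₁) := by ring
    rintro x (rfl | rfl)
    · exact hdvd _ F a' hDF (by rw [hFa, ha'L])
    · exact hdvd _ G b' hDG (by rw [hGb, hb'L])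
  · -- span {H} ≤ span {f, g}
    rw [Submodule.span_le, Set.singleton_subset_iff]
    have hsum : (α : L) * F.coeff 0 + (β : L) * G.coeff 0 = lam := by
      rw [hlam]
      field_simp
      linear_combination (α : L) * hFa + (β : L) * hGb + hαβL
    obtain ⟨P, Q, hPQ, hP0, hQ0⟩ :
        ∃ P Q : L[X], P * F + Q * G = C lam ∧ P.coeff 0 ∈ K ∧ Q.coeff 0 ∈ K := by
      rcases hab with h | h
      · have hF0 : F.coeff 0 ≠ 0 := by
          intro h0; exact h (by rw [← hFa, h0, zero_mul])
        obtain ⟨P, Q, h1, h2, h3⟩ := adjust hcop hF0 hsum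
        exact ⟨P, Q, h1, h2 ▸ α.2, h3 ▸ β.2⟩
      · have hG0 : G.coeff 0 ≠ 0 := by
          intro h0; exact h (by rw [← hGb, h0, zero_mul])
        obtain ⟨Q, P, h1, h2, h3⟩ := adjust (lam := lam) (α := (β : L)) (β := (α : L))
          hcop.symm hG0 (by linear_combination hsum)
        exact ⟨P, Q, by linear_combination h1, h3 ▸ α.2, h2 ▸ β.2⟩
    refine Ideal.mem_span_pair.mpr ⟨⟨P, hP0⟩, ⟨Q, hQ0⟩, ?_⟩
    apply Subtype.ext
    show P * (f : L[X]) + Q * (g : L[X]) = C lam * D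
    rw [← hDF, ← hDG]
    linear_combination D * hPQ

private lemma frac_of_bezout (K : Subring L) (hbez : IsBezout ↥(composite K)) :
    FracOfField K := by
  intro l
  haveI := hbez
  have hXmem : (X : L[X]) ∈ composite K := by
    rw [mem_composite, coeff_X_zero]; exact K.zero_mem
  have hlXmem : (C l * X : L[X]) ∈ composite K := by
    rw [mem_composite, mul_coeff_zero, coeff_X_zero, mul_zero]; exact K.zero_mem
  set x : ↥(composite K) := ⟨X, hXmem⟩ with hx
  set y : ↥(composite K) := ⟨C l * X, hlXmem⟩ with hy
  obtain ⟨G, hG⟩ := (IsBezout.iff_span_pair_isPrincipal.mp hbez x y).principal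
  have hxmem : x ∈ Ideal.span {x, y} := Ideal.subset_span (Set.mem_insert _ _)
  have hymem : y ∈ Ideal.span {x, y} := Ideal.subset_span (Set.mem_insert_of_mem _ rfl)
  rw [hG] at hxmem hymem
  obtain ⟨m, hm⟩ := Ideal.mem_span_singleton.mp hxmem
  obtain ⟨n, hn⟩ := Ideal.mem_span_singleton.mp hymem
  have hGmem : G ∈ Ideal.span {x, y} := by rw [hG]; exact Ideal.subset_span rfl
  obtain ⟨p, q, hpq⟩ := Ideal.mem_span_pair.mp hGmem
  -- pass to L[X]
  have hmL : (X : L[X]) = (G : L[X]) * (m : L[X]) := congrArg Subtype.val hm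
  have hnL : (C l * X : L[X]) = (G : L[X]) * (n : L[X]) := congrArg Subtype.val hn
  have hpqL : (p : L[X]) * X + (q : L[X]) * (C l * X) = (G : L[X]) :=
    congrArg Subtype.val hpq
  have hG0 : (G : L[X]).coeff 0 = 0 := by
    have := congrArg (fun r : L[X] => r.coeff 0) hpqL
    simpa [mul_coeff_zero, coeff_X_zero] using this.symm
  obtain ⟨G1, hG1⟩ := X_dvd_iff.mpr hG0
  have hXne : (X : L[X]) ≠ 0 := X_ne_zero
  have h1 : G1 * (m : L[X]) = 1 := by
    apply mul_left_cancel₀ hXne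
    rw [mul_one, ← mul_assoc, ← hG1, ← hmL]
  obtain ⟨u, hu, hCu⟩ := Polynomial.isUnit_iff.mp (IsUnit.of_mul_eq_one _ h1)
  have hune : u ≠ 0 := hu.ne_zero
  have hmCu : (m : L[X]) = C u⁻¹ := by
    have h2 : C u * (m : L[X]) = 1 := by rw [hCu]; exact h1
    calc (m : L[X]) = C u⁻¹ * (C u * (m : L[X])) := by
          rw [← mul_assoc, ← C_mul, inv_mul_cancel₀ hune, C_1, one_mul]
      _ = C u⁻¹ := by rw [h2, mul_one]
  have huinvK : u⁻¹ ∈ K := by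
    have := m.2
    rw [mem_composite, hmCu, coeff_C_zero] at this
    exact this
  have hnCu : (n : L[X]) = C (u⁻¹ * l) := by
    have h4 : C u * (n : L[X]) = C l := by
      apply mul_left_cancel₀ hXne
      calc X * (C u * (n : L[X])) = X * C u * (n : L[X]) := by ring
        _ = (G : L[X]) * (n : L[X]) := by rw [hCu, ← hG1]
        _ = C l * X := hnL.symm
        _ = X * C l := by ring
    calc (n : L[X]) = C u⁻¹ * (C u * (n : L[X])) := by
          rw [← mul_assoc, ← C_mul, inv_mul_cancel₀ hune, C_1, one_mul]
      _ = C u⁻¹ * C l := by rw [h4]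
      _ = C (u⁻¹ * l) := by rw [← C_mul]
  have hulK : u⁻¹ * l ∈ K := by
    have := n.2
    rw [mem_composite, hnCu, coeff_C_zero] at this
    exact this
  exact ⟨u⁻¹ * l, hulK, u⁻¹, huinvK, inv_ne_zero hune, by ring⟩

private lemma bezout_of_bezout (K : Subring L) (hbez : IsBezout ↥(composite K)) :
    IsBezout ↥K := by
  haveI := hbez
  rw [IsBezout.iff_span_pair_isPrincipal]
  intro A B
  by_cases hAB : A = 0 ∧ B = 0
  · refine ⟨0, ?_⟩
    rw [hAB.1, hAB.2, Set.pair_eq_singleton]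
  have hfmem : (C (A : L) : L[X]) ∈ composite K := by
    rw [mem_composite, coeff_C_zero]; exact A.2
  have hgmem : (C (B : L) : L[X]) ∈ composite K := by
    rw [mem_composite, coeff_C_zero]; exact B.2
  set f : ↥(composite K) := ⟨C (A : L), hfmem⟩ with hfdef
  set g : ↥(composite K) := ⟨C (B : L), hgmem⟩ with hgdef
  obtain ⟨G, hG⟩ := (IsBezout.iff_span_pair_isPrincipal.mp hbez f g).principal
  have hfm : f ∈ Ideal.span {f, g} := Ideal.subset_span (Set.mem_insert _ _)
  have hgm : g ∈ Ideal.span {f, g} := Ideal.subset_span (Set.mem_insert_of_mem _ rfl)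
  rw [hG] at hfm hgm
  obtain ⟨m, hm⟩ := Ideal.mem_span_singleton.mp hfm
  obtain ⟨n, hn⟩ := Ideal.mem_span_singleton.mp hgm
  have hGm : G ∈ Ideal.span {f, g} := by rw [hG]; exact Ideal.subset_span rfl
  obtain ⟨p, q, hpq⟩ := Ideal.mem_span_pair.mp hGm
  have hmL : (C (A : L) : L[X]) = (G : L[X]) * (m : L[X]) := congrArg Subtype.val hm
  have hnL : (C (B : L) : L[X]) = (G : L[X]) * (n : L[X]) := congrArg Subtype.val hn
  have hpqL : (p : L[X]) * C (A : L) + (q : L[X]) * C (B : L) = (G : L[X]) :=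
    congrArg Subtype.val hpq
  have hGne : (G : L[X]) ≠ 0 := by
    intro h0
    apply hAB
    constructor
    · apply Subtype.ext
      have : (C (A : L) : L[X]) = 0 := by rw [hmL, h0, zero_mul]
      exact_mod_cast Polynomial.C_eq_zero.mp this
    · apply Subtype.ext
      have : (C (B : L) : L[X]) = 0 := by rw [hnL, h0, zero_mul]
      exact_mod_cast Polynomial.C_eq_zero.mp this
  have hdeg : (G : L[X]).natDegree = 0 := by
    rcases (not_and_or.mp hAB) with h | h
    · have hCA : (C (A : L) : L[X]) ≠ 0 := by
        rw [Ne, Polynomial.C_eq_zero]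
        exact fun h' => h (Subtype.ext h')
      have := Polynomial.natDegree_le_of_dvd ⟨(m : L[X]), hmL⟩ hCA
      simpa using this
    · have hCB : (C (B : L) : L[X]) ≠ 0 := by
        rw [Ne, Polynomial.C_eq_zero]
        exact fun h' => h (Subtype.ext h')
      have := Polynomial.natDegree_le_of_dvd ⟨(n : L[X]), hnL⟩ hCB
      simpa using this
  have hGC : (G : L[X]) = C ((G : L[X]).coeff 0) := Polynomial.eq_C_of_natDegree_eq_zero hdeg
  set γ := (G : L[X]).coeff 0 with hγ
  have hγK : γ ∈ K := G.2
  have hγA : (A : L) = γ * (m : L[X]).coeff 0 := by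
    have := congrArg (fun r : L[X] => r.coeff 0) hmL
    simpa [mul_coeff_zero, coeff_C_zero] using this
  have hγB : (B : L) = γ * (n : L[X]).coeff 0 := by
    have := congrArg (fun r : L[X] => r.coeff 0) hnL
    simpa [mul_coeff_zero, coeff_C_zero] using this
  have hγpq : (p : L[X]).coeff 0 * (A : L) + (q : L[X]).coeff 0 * (B : L) = γ := by
    have := congrArg (fun r : L[X] => r.coeff 0) hpqL
    simpa [mul_coeff_zero, coeff_C_zero] using this
  refine ⟨⟨γ, hγK⟩, le_antisymm ?_ ?_⟩
  · rw [Ideal.span_le]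
    rintro z (rfl | rfl)
    · exact Ideal.mem_span_singleton.mpr ⟨⟨(m : L[X]).coeff 0, m.2⟩, Subtype.ext hγA⟩
    · exact Ideal.mem_span_singleton.mpr ⟨⟨(n : L[X]).coeff 0, n.2⟩, Subtype.ext hγB⟩
  · rw [Submodule.span_le, Set.singleton_subset_iff]
    exact Ideal.mem_span_pair.mpr ⟨⟨(p : L[X]).coeff 0, p.2⟩, ⟨(q : L[X]).coeff 0, q.2⟩,
      Subtype.ext hγpq⟩

end Aux

theorem stmt_15 {L : Type*} [Field L] (K : Subring L) (hKne : K ≠ ⊤) :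
    IsBezout ↥(composite K) ↔ (FracOfField K ∧ IsBezout ↥K) := by
  constructor
  · intro h
    exact ⟨frac_of_bezout K h, bezout_of_bezout K h⟩
  · rintro ⟨hfrac, hbez⟩
    rw [IsBezout.iff_span_pair_isPrincipal]
    exact fun x y => pair_principal K hfrac hbez x y
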